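/- For every θ ∈ ℝ, the matrix-valued function t ↦ K(t,θ) satisfies the variational equation dK/dt(t,θ) = Dψ(x₀(t+θ)) · K(t,θ), where Dψ(x₀(t+θ)) is the 2×2 matrix with rows (2sin²(t+θ), 2sin(t+θ)cos(t+θ)+1) and (2sin(t+θ)cos(t+θ)−1, 2cos²(t+θ)). -/

import Mathlib

open Real Matrix

/-- `x₀(θ) = (sin θ, cos θ)`. -/
noncomputable def x0 (θ : ℝ) : Fin 2 → ℝ := ![Real.sin θ, Real.cos θ]

/-- `K(t,θ)` is the `2×2` matrix with rows `(cos(t+θ), e^{2t} sin(t+θ))` and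
`(−sin(t+θ), e^{2t} cos(t+θ))`. -/
noncomputable def K (t θ : ℝ) : Matrix (Fin 2) (Fin 2) ℝ :=
  !![Real.cos (t + θ), Real.exp (2 * t) * Real.sin (t + θ);
     -Real.sin (t + θ), Real.exp (2 * t) * Real.cos (t + θ)]

/-- `Dψ(x₀(a))`: the Jacobian matrix of `ψ` at `x₀(a)`, i.e. the `2×2` matrix with rows
`(2sin²a, 2 sin a cos a + 1)` and `(2 sin a cos a − 1, 2cos²a)`. -/
noncomputable def DpsiX0 (a : ℝ) : Matrix (Fin 2) (Fin 2) ℝ :=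
  !![2 * Real.sin a ^ 2, 2 * Real.sin a * Real.cos a + 1;
     2 * Real.sin a * Real.cos a - 1, 2 * Real.cos a ^ 2]

private lemma hadd (θ t : ℝ) : HasDerivAt (fun t : ℝ => t + θ) 1 t := by
  simpa using (hasDerivAt_id t).add_const θ

private lemma hsin (θ t : ℝ) :
    HasDerivAt (fun t : ℝ => Real.sin (t + θ)) (Real.cos (t + θ)) t := by
  simpa [Function.comp_def] using (Real.hasDerivAt_sin (t + θ)).comp t (hadd θ t)

private lemma hcos (θ t : ℝ) :
    HasDerivAt (fun t : ℝ => Real.cos (t + θ)) (-Real.sin (t + θ)) t := by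
  simpa [Function.comp_def] using (Real.hasDerivAt_cos (t + θ)).comp t (hadd θ t)

private lemma hexp (t : ℝ) :
    HasDerivAt (fun t : ℝ => Real.exp (2 * t)) (2 * Real.exp (2 * t)) t := by
  have h : HasDerivAt (fun t : ℝ => (2 : ℝ) * t) 2 t := by
    simpa using (hasDerivAt_id t).const_mul (2 : ℝ)
  simpa [Function.comp_def, mul_comm] using (Real.hasDerivAt_exp (2 * t)).comp t h

/-- identity (38) of the paper.  For every `θ ∈ ℝ` the matrix-valued
function `t ↦ K(t,θ)` satisfies the variational equation
`dK/dt(t,θ) = Dψ(x₀(t+θ)) · K(t,θ)` (stated entrywise). -/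
theorem stmt11 :
    ∀ θ t : ℝ, ∀ i j : Fin 2,
      HasDerivAt (fun t => K t θ i j) ((DpsiX0 (t + θ) * K t θ) i j) t := by
  intro θ t i j
  have s2 := Real.sin_sq_add_cos_sq (t + θ)
  fin_cases i <;> fin_cases j <;>
    simp [K, DpsiX0, Matrix.mul_apply, Fin.sum_univ_two]
  · convert hcos θ t using 1; nlinarith [s2]
  · refine ((hexp t).mul (hsin θ t)).congr_deriv ?_; linear_combination -2 * Real.exp (2*t) * Real.sin (t+θ) * s2
  · refine (hsin θ t).neg.congr_deriv ?_; nlinarith [s2]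
  · refine ((hexp t).mul (hcos θ t)).congr_deriv ?_; linear_combination -2 * Real.exp (2*t) * Real.cos (t+θ) * s2
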